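/- arXiv:1907.02135 — 2 statements merged into one kernel-verified Lean document; each statement's English description precedes it below -/
import Mathlib

section
/- The following six elements of U(sl₂) coincide: zyx + zx, zxy − zy, yzx − yx, xzy + xy, yxz + yz, and xyz − xz. -/
open scoped TensorProduct

noncomputable section

namespace RacahPaper

variable (F : Type) [Field F]

/-- Defining relations of `U(sl₂)`: generators `e = ι 0`, `f = ι 1`, `h = ι 2` with
`he - eh = 2e`, `hf - fh = -2f`, `ef - fe = h`. -/
inductive slRel : FreeAlgebra F (Fin 3) → FreeAlgebra F (Fin 3) → Prop
  | he : slRel (FreeAlgebra.ι F 2 * FreeAlgebra.ι F 0 - FreeAlgebra.ι F 0 * FreeAlgebra.ι F 2)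
      (2 * FreeAlgebra.ι F 0)
  | hf : slRel (FreeAlgebra.ι F 2 * FreeAlgebra.ι F 1 - FreeAlgebra.ι F 1 * FreeAlgebra.ι F 2)
      (-(2 * FreeAlgebra.ι F 1))
  | ef : slRel (FreeAlgebra.ι F 0 * FreeAlgebra.ι F 1 - FreeAlgebra.ι F 1 * FreeAlgebra.ι F 0)
      (FreeAlgebra.ι F 2)

/-- The universal enveloping algebra `U(sl₂)`. -/
abbrev U := RingQuot (slRel F)

/-- The generator `e` of `U(sl₂)`. -/
def e : U F := RingQuot.mkAlgHom F (slRel F) (FreeAlgebra.ι F 0)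

/-- The generator `f` of `U(sl₂)`. -/
def f : U F := RingQuot.mkAlgHom F (slRel F) (FreeAlgebra.ι F 1)

/-- The generator `h` of `U(sl₂)`. -/
def h : U F := RingQuot.mkAlgHom F (slRel F) (FreeAlgebra.ι F 2)

/-- The equitable generator `x = -f - h/2`. -/
def ux : U F := -f F - (2 : F)⁻¹ • h F

/-- The equitable generator `y = h/2`. -/
def uy : U F := (2 : F)⁻¹ • h F

/-- The equitable generator `z = e - h/2`. -/
def uz : U F := e F - (2 : F)⁻¹ • h F

/-- The normalized Casimir element `Λ = ef + h(h-2)/4` of `U(sl₂)`. -/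
def Lam : U F := e F * f F + (4 : F)⁻¹ • (h F * (h F - 2))

/-- `ν_x = f/2`. -/
def nux : U F := (2 : F)⁻¹ • f F

/-- `ν_z = e/2`. -/
def nuz : U F := (2 : F)⁻¹ • e F

/-- `U_n`: the span of the `e^i h^j f^k` with `k - i = n`. -/
def Usub (n : ℤ) : Submodule F (U F) :=
  Submodule.span F {u : U F | ∃ i j k : ℕ, (k : ℤ) - (i : ℤ) = n ∧ u = e F ^ i * h F ^ j * f F ^ k}

-- Racah algebra
/-- Generator `A` of the free algebra. -/
def fA : FreeAlgebra F (Fin 4) := FreeAlgebra.ι F 0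
/-- Generator `B` of the free algebra. -/
def fB : FreeAlgebra F (Fin 4) := FreeAlgebra.ι F 1
/-- Generator `C` of the free algebra. -/
def fC : FreeAlgebra F (Fin 4) := FreeAlgebra.ι F 2
/-- Generator `D` of the free algebra. -/
def fD : FreeAlgebra F (Fin 4) := FreeAlgebra.ι F 3

/-- `α = [A,D] + AC - BA` in the free algebra. -/
def falpha : FreeAlgebra F (Fin 4) := (fA F * fD F - fD F * fA F) + fA F * fC F - fB F * fA F
/-- `β = [B,D] + BA - CB` in the free algebra. -/
def fbeta : FreeAlgebra F (Fin 4) := (fB F * fD F - fD F * fB F) + fB F * fA F - fC F * fB F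
/-- `γ = [C,D] + CB - AC` in the free algebra. -/
def fgamma : FreeAlgebra F (Fin 4) := (fC F * fD F - fD F * fC F) + fC F * fB F - fA F * fC F

/-- Defining relations of the Racah algebra: `[A,B] = [B,C] = [C,A] = 2D` and each of
`α, β, γ` commutes with each of the generators `A, B, C, D`. -/
inductive racahRel : FreeAlgebra F (Fin 4) → FreeAlgebra F (Fin 4) → Prop
  | AB : racahRel (fA F * fB F - fB F * fA F) (2 * fD F)
  | BC : racahRel (fB F * fC F - fC F * fB F) (2 * fD F)
  | CA : racahRel (fC F * fA F - fA F * fC F) (2 * fD F)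
  | calpha (i : Fin 4) : racahRel (falpha F * FreeAlgebra.ι F i) (FreeAlgebra.ι F i * falpha F)
  | cbeta (i : Fin 4) : racahRel (fbeta F * FreeAlgebra.ι F i) (FreeAlgebra.ι F i * fbeta F)
  | cgamma (i : Fin 4) : racahRel (fgamma F * FreeAlgebra.ι F i) (FreeAlgebra.ι F i * fgamma F)

/-- The Racah algebra `ℜ`. -/
abbrev Racah := RingQuot (racahRel F)

/-- Generator `A` of the Racah algebra. -/
def A : Racah F := RingQuot.mkAlgHom F (racahRel F) (fA F)
/-- Generator `B` of the Racah algebra. -/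
def B : Racah F := RingQuot.mkAlgHom F (racahRel F) (fB F)
/-- Generator `C` of the Racah algebra. -/
def C : Racah F := RingQuot.mkAlgHom F (racahRel F) (fC F)
/-- Generator `D` of the Racah algebra. -/
def D : Racah F := RingQuot.mkAlgHom F (racahRel F) (fD F)

/-- `α = [A,D] + AC - BA` in the Racah algebra. -/
def alpha : Racah F := (A F * D F - D F * A F) + A F * C F - B F * A F
/-- `β = [B,D] + BA - CB` in the Racah algebra. -/
def beta : Racah F := (B F * D F - D F * B F) + B F * A F - C F * B F
/-- `γ = [C,D] + CB - AC` in the Racah algebra. -/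
def gamma : Racah F := (C F * D F - D F * C F) + C F * B F - A F * C F
/-- `δ = A + B + C` in the Racah algebra. -/
def delta : Racah F := A F + B F + C F

/-- `Ω_A = D² + (BAC + CAB)/2 + A² + Bγ - Cβ - Aδ`. -/
def OmegaA : Racah F :=
  D F ^ 2 + (2 : F)⁻¹ • (B F * A F * C F + C F * A F * B F) + A F ^ 2
    + B F * gamma F - C F * beta F - A F * delta F

/-- `Ω_B = D² + (CBA + ABC)/2 + B² + Cα - Aγ - Bδ`. -/
def OmegaB : Racah F :=
  D F ^ 2 + (2 : F)⁻¹ • (C F * B F * A F + A F * B F * C F) + B F ^ 2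
    + C F * alpha F - A F * gamma F - B F * delta F

/-- `Ω_C = D² + (ACB + BCA)/2 + C² + Aβ - Bα - Cδ`. -/
def OmegaC : Racah F :=
  D F ^ 2 + (2 : F)⁻¹ • (A F * C F * B F + B F * C F * A F) + C F ^ 2
    + A F * beta F - B F * alpha F - C F * delta F

-- the tensor algebra F[a,b,c] ⊗ U(sl2)
/-- The polynomial algebra `F[a,b,c]`. -/
abbrev P := MvPolynomial (Fin 3) F

/-- The tensor product algebra `F[a,b,c] ⊗ U(sl₂)`. -/
abbrev T := P F ⊗[F] U F

/-- The indeterminate `a`. -/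
def pa : P F := MvPolynomial.X 0
/-- The indeterminate `b`. -/
def pb : P F := MvPolynomial.X 1
/-- The indeterminate `c`. -/
def pc : P F := MvPolynomial.X 2

/-- `A♮`. -/
def Anat : T F :=
  (pa F * (pa F + 1)) ⊗ₜ[F] (1 : U F) + (pb F - pc F - pa F) ⊗ₜ[F] ux F
    + (pa F + pb F - pc F + 1) ⊗ₜ[F] uy F - (1 : P F) ⊗ₜ[F] (ux F * uy F)

/-- `B♮`. -/
def Bnat : T F :=
  (pb F * (pb F + 1)) ⊗ₜ[F] (1 : U F) + (pc F - pa F - pb F) ⊗ₜ[F] uy F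
    + (pb F + pc F - pa F + 1) ⊗ₜ[F] uz F - (1 : P F) ⊗ₜ[F] (uy F * uz F)

/-- `C♮`. -/
def Cnat : T F :=
  (pc F * (pc F + 1)) ⊗ₜ[F] (1 : U F) + (pa F - pb F - pc F) ⊗ₜ[F] uz F
    + (pc F + pa F - pb F + 1) ⊗ₜ[F] ux F - (1 : P F) ⊗ₜ[F] (uz F * ux F)

/-- `D♮`. -/
def Dnat : T F :=
  (1 : P F) ⊗ₜ[F] (uz F * uy F * ux F + uz F * ux F)
    + (pc F + pb F * (pc F + pa F - pb F)) ⊗ₜ[F] ux F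
    + (pa F + pc F * (pa F + pb F - pc F)) ⊗ₜ[F] uy F
    + (pb F + pa F * (pb F + pc F - pa F)) ⊗ₜ[F] uz F
    + (pb F - pc F) ⊗ₜ[F] (ux F * uy F)
    + (pc F - pa F) ⊗ₜ[F] (uy F * uz F)
    + (pa F - pb F) ⊗ₜ[F] (uz F * ux F)

/-- `R = 2 ⊗ yν_x + 2(c+a-b+1) ⊗ ν_x`. -/
def Rel : T F :=
  (2 : P F) ⊗ₜ[F] (uy F * nux F) + (2 * (pc F + pa F - pb F + 1)) ⊗ₜ[F] nux F

/-- `L = -2 ⊗ yν_z - 2(a-b-c-1) ⊗ ν_z`. -/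
def Lel : T F :=
  -((2 : P F) ⊗ₜ[F] (uy F * nuz F)) - (2 * (pa F - pb F - pc F - 1)) ⊗ₜ[F] nuz F

/-- `θ = 1⊗y - b⊗1`. -/
def theta : T F := (1 : P F) ⊗ₜ[F] uy F - pb F ⊗ₜ[F] (1 : U F)

/-- `ϑ = 1⊗y + a⊗1`. -/
def vartheta : T F := (1 : P F) ⊗ₜ[F] uy F + pa F ⊗ₜ[F] (1 : U F)

/-- `F[a,b,c] ⊗ U_n` as a subspace of `F[a,b,c] ⊗ U(sl₂)`. -/
def TU (n : ℤ) : Submodule F (T F) :=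
  Submodule.span F {t : T F | ∃ (p : P F) (u : U F), u ∈ Usub F n ∧ t = p ⊗ₜ[F] u}

lemma U_neg_mul (a b : U F) : -a * b = -(a * b) := neg_mul a b
lemma U_mul_neg (a b : U F) : a * -b = -(a * b) := mul_neg a b
lemma U_sub_mul (a b c : U F) : (a - b) * c = a * c - b * c := sub_mul a b c
lemma U_mul_sub (a b c : U F) : a * (b - c) = a * b - a * c := mul_sub a b c
lemma U_add_mul (a b c : U F) : (a + b) * c = a * c + b * c := add_mul a b c
lemma U_mul_add (a b c : U F) : a * (b + c) = a * b + a * c := mul_add a b c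
lemma U_smul_mul (s : F) (a b : U F) : (s • a) * b = s • (a * b) := smul_mul_assoc s a b
lemma U_mul_smul (s : F) (a b : U F) : a * (s • b) = s • (a * b) := mul_smul_comm s a b
lemma U_mul_assoc (a b c : U F) : a * b * c = a * (b * c) := mul_assoc a b c

lemma u_ef : e F * f F - f F * e F = h F := by
  simpa [e, f, h, map_sub, map_mul] using RingQuot.mkAlgHom_rel F (slRel.ef (F := F))
lemma u_he : h F * e F - e F * h F = 2 * e F := by
  simpa [e, h, map_sub, map_mul, map_ofNat] using RingQuot.mkAlgHom_rel F (slRel.he (F := F))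
lemma u_hf : h F * f F - f F * h F = -(2 * f F) := by
  simpa [f, h, map_sub, map_mul, map_ofNat] using RingQuot.mkAlgHom_rel F (slRel.hf (F := F))

lemma key_hf : h F * f F = f F * h F - (2 : F) • f F := by
  have h2 : (2 : F) • f F = 2 * f F := by rw [Algebra.smul_def, map_ofNat]
  have := u_hf F
  rw [sub_eq_iff_eq_add] at this
  rw [this, h2]; abel
lemma key_he : h F * e F = e F * h F + (2 : F) • e F := by
  have h2 : (2 : F) • e F = 2 * e F := by rw [Algebra.smul_def, map_ofNat]
  have := u_he F
  rw [sub_eq_iff_eq_add] at this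
  rw [this, h2]; abel
lemma key_ef : e F * f F = f F * e F + h F := by
  have := u_ef F
  rw [sub_eq_iff_eq_add] at this
  rw [this]; abel

lemma rel_xy (hchar : (2 : F) ≠ 0) : ux F * uy F - uy F * ux F = ux F + uy F := by
  simp only [ux, uy, U_sub_mul, U_mul_sub, U_neg_mul, U_mul_neg, U_smul_mul, U_mul_smul,
    smul_smul, smul_neg, smul_sub, smul_add, key_hf]
  match_scalars <;> (field_simp; try ring1)

lemma rel_yz (hchar : (2 : F) ≠ 0) : uy F * uz F - uz F * uy F = uy F + uz F := by
  simp only [uy, uz, U_sub_mul, U_mul_sub, U_neg_mul, U_mul_neg, U_smul_mul, U_mul_smul,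
    smul_smul, smul_neg, smul_sub, smul_add, key_he]
  match_scalars <;> (field_simp; try ring1)

lemma rel_zx (hchar : (2 : F) ≠ 0) : uz F * ux F - ux F * uz F = uz F + ux F := by
  simp only [ux, uz, U_sub_mul, U_mul_sub, U_neg_mul, U_mul_neg, U_smul_mul, U_mul_smul,
    smul_smul, smul_neg, smul_sub, smul_add, key_hf, key_he, key_ef]
  match_scalars <;> (field_simp; try ring1)
theorem statement9 (hchar : (2 : F) ≠ 0) :
    uz F * uy F * ux F + uz F * ux F = uz F * ux F * uy F - uz F * uy F ∧
    uz F * uy F * ux F + uz F * ux F = uy F * uz F * ux F - uy F * ux F ∧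
    uz F * uy F * ux F + uz F * ux F = ux F * uz F * uy F + ux F * uy F ∧
    uz F * uy F * ux F + uz F * ux F = uy F * ux F * uz F + uy F * uz F ∧
    uz F * uy F * ux F + uz F * ux F = ux F * uy F * uz F - ux F * uz F := by
  have hxy : ux F * uy F = uy F * ux F + ux F + uy F := by
    have := rel_xy F hchar; rw [sub_eq_iff_eq_add] at this; rw [this]; abel
  have hyz : uy F * uz F = uz F * uy F + uy F + uz F := by
    have := rel_yz F hchar; rw [sub_eq_iff_eq_add] at this; rw [this]; abel
  have hxz : ux F * uz F = uz F * ux F - uz F - ux F := by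
    have := rel_zx F hchar; rw [sub_eq_iff_eq_add] at this; rw [this]; abel
  have hxyw : ∀ w : U F, ux F * (uy F * w) = uy F * (ux F * w) + ux F * w + uy F * w := by
    intro w
    rw [← U_mul_assoc, hxy, U_add_mul, U_add_mul, U_mul_assoc]
  have hyzw : ∀ w : U F, uy F * (uz F * w) = uz F * (uy F * w) + uy F * w + uz F * w := by
    intro w
    rw [← U_mul_assoc, hyz, U_add_mul, U_add_mul, U_mul_assoc]
  have hxzw : ∀ w : U F, ux F * (uz F * w) = uz F * (ux F * w) - uz F * w - ux F * w := by
    intro w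
    rw [← U_mul_assoc, hxz, U_sub_mul, U_sub_mul, U_mul_assoc]
  refine ⟨?_, ?_, ?_, ?_, ?_⟩ <;>
    simp only [U_mul_assoc, hxy, hyz, hxz, hxyw, hyzw, hxzw, U_mul_add, U_add_mul,
      U_mul_sub, U_sub_mul] <;>
    abel

end RacahPaper
end
end

section
/- The five elements θ, ϑ, RL, LR, [R,L] of F[a,b,c] ⊗ U(sl₂) mutually commute (every pair of them commutes). -/
open scoped TensorProduct

noncomputable section

namespace RacahPaper

variable (F : Type) [Field F]

-- ===== auxiliary lemmas =====

lemma rel_he : h F * e F = 2 * e F + e F * h F := by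
  have := RingQuot.mkAlgHom_rel F (slRel.he (F := F))
  simp only [map_sub, map_mul, map_ofNat] at this
  rw [← e, ← h] at this
  exact eq_add_of_sub_eq this

lemma rel_hf : h F * f F = -(2 * f F) + f F * h F := by
  have := RingQuot.mkAlgHom_rel F (slRel.hf (F := F))
  simp only [map_sub, map_mul, map_neg, map_ofNat] at this
  rw [← f, ← h] at this
  exact eq_add_of_sub_eq this

lemma rel_ef : e F * f F = h F + f F * e F := by
  have := RingQuot.mkAlgHom_rel F (slRel.ef (F := F))
  simp only [map_sub, map_mul] at this
  rw [← e, ← f, ← h] at this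
  exact eq_add_of_sub_eq this

lemma comm_h_ef : Commute (h F) (e F * f F) := by
  unfold Commute SemiconjBy
  have he := rel_he F
  have hf := rel_hf F
  calc h F * (e F * f F) = (h F * e F) * f F := by rw [mul_assoc]
    _ = (2 * e F + e F * h F) * f F := by rw [he]
    _ = 2 * (e F * f F) + e F * (h F * f F) := by noncomm_ring
    _ = 2 * (e F * f F) + e F * (-(2 * f F) + f F * h F) := by rw [hf]
    _ = (e F * f F) * h F := by noncomm_ring; simp only [mul_smul_comm]; abel

lemma comm_h_Lam : Commute (h F) (Lam F) := by
  unfold Lam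
  have c2 : Commute (h F) (h F * (h F - 2)) :=
    (Commute.refl _).mul_right ((Commute.refl _).sub_right (Commute.ofNat_right _ 2))
  exact (comm_h_ef F).add_right (c2.smul_right _)

lemma comm_uy_Lam : Commute (uy F) (Lam F) := (comm_h_Lam F).smul_left _

lemma four_ne (hchar : (2 : F) ≠ 0) : (4 : F) ≠ 0 := by
  have : (2 : F) * 2 ≠ 0 := mul_ne_zero hchar hchar
  simpa [show (2:F)*2 = 4 by norm_num] using this

lemma uy_nux (hchar : (2 : F) ≠ 0) : uy F * nux F = nux F * uy F - nux F := by
  unfold uy nux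
  simp only [smul_mul_assoc, mul_smul_comm, smul_smul]
  rw [rel_hf F]
  simp only [two_mul]
  match_scalars <;> (field_simp; try ring) <;> try norm_num

lemma uy_nuz (hchar : (2 : F) ≠ 0) : uy F * nuz F = nuz F * uy F + nuz F := by
  unfold uy nuz
  simp only [smul_mul_assoc, mul_smul_comm, smul_smul]
  rw [rel_he F]
  simp only [two_mul]
  match_scalars <;> (field_simp; try ring) <;> try norm_num

lemma nux_nuz (hchar : (2 : F) ≠ 0) :
    nux F * nuz F = (4 : F)⁻¹ • (Lam F - uy F ^ 2 - uy F) := by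
  have h4 := four_ne F hchar
  unfold nux nuz Lam uy
  simp only [pow_two, smul_mul_assoc, mul_smul_comm, smul_smul, mul_sub, sub_mul, smul_sub,
    smul_add, mul_two]
  rw [rel_ef F]
  match_scalars <;> (field_simp; try ring) <;> try norm_num

lemma nuz_nux (hchar : (2 : F) ≠ 0) :
    nuz F * nux F = (4 : F)⁻¹ • (Lam F - uy F ^ 2 + uy F) := by
  have h4 := four_ne F hchar
  unfold nux nuz Lam uy
  simp only [pow_two, smul_mul_assoc, mul_smul_comm, smul_smul, mul_sub, sub_mul, smul_sub,
    smul_add, mul_two]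
  rw [rel_ef F]
  match_scalars <;> (field_simp; try ring) <;> try norm_num

-- helper rewriting lemmas in `T F` (term-mode, to avoid instance-unification issues in `rw`)
lemma Tmul_sub (x y z : T F) : x * (y - z) = x * y - x * z := mul_sub x y z
lemma Tsub_mul (x y z : T F) : (x - y) * z = x * z - y * z := sub_mul x y z
lemma Tmul_neg (x y : T F) : x * -y = -(x * y) := by
  have h := mul_sub x 0 y
  simpa using h
lemma Tneg_mul (x y : T F) : -x * y = -(x * y) := by
  have h := sub_mul 0 x y
  simpa using h
lemma Tmul_assoc (x y z : T F) : x * y * z = x * (y * z) := mul_assoc x y z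

-- T-level elements
/-- `1 ⊗ y`. -/
def tty : T F := (1 : P F) ⊗ₜ[F] uy F
/-- `1 ⊗ Λ`. -/
def ttL : T F := (1 : P F) ⊗ₜ[F] Lam F
/-- `p ⊗ 1`. -/
def cp (p : P F) : T F := p ⊗ₜ[F] (1 : U F)

lemma cp_comm (p : P F) (t : T F) : Commute (cp F p) t := by
  unfold Commute SemiconjBy cp
  induction t using TensorProduct.induction_on with
  | zero => simp
  | tmul q u => simp [Algebra.TensorProduct.tmul_mul_tmul, mul_comm]
  | add x y hx hy => rw [mul_add, add_mul, hx, hy]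

lemma tty_ttL : Commute (tty F) (ttL F) := by
  unfold Commute SemiconjBy tty ttL
  simp [Algebra.TensorProduct.tmul_mul_tmul, (comm_uy_Lam F).eq]

/-- `2 ⊗ y + r ⊗ 1`. -/
def G (r : P F) : T F := (2 : P F) ⊗ₜ[F] uy F + r ⊗ₜ[F] (1 : U F)

lemma G_eq (r : P F) : G F r = cp F 2 * tty F + cp F r := by
  unfold G cp tty
  simp [Algebra.TensorProduct.tmul_mul_tmul]

lemma Rel_eq (hchar : (2 : F) ≠ 0) :
    Rel F = ((1 : P F) ⊗ₜ[F] nux F) * G F (2 * (pc F + pa F - pb F + 1) - 2) := by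
  unfold Rel G
  rw [uy_nux F hchar]
  simp only [mul_add, Algebra.TensorProduct.tmul_mul_tmul, one_mul, mul_one]
  simp only [TensorProduct.tmul_sub, TensorProduct.sub_tmul]
  abel

lemma Lel_eq (hchar : (2 : F) ≠ 0) :
    Lel F = -(((1 : P F) ⊗ₜ[F] nuz F) * G F (2 * (pa F - pb F - pc F - 1) + 2)) := by
  unfold Lel G
  rw [uy_nuz F hchar]
  simp only [mul_add, Algebra.TensorProduct.tmul_mul_tmul, one_mul, mul_one]
  simp only [TensorProduct.tmul_add, TensorProduct.add_tmul, neg_add]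
  abel

lemma G_nuz (hchar : (2 : F) ≠ 0) (r : P F) :
    G F r * ((1 : P F) ⊗ₜ[F] nuz F) = ((1 : P F) ⊗ₜ[F] nuz F) * G F (r + 2) := by
  unfold G
  simp only [add_mul, mul_add, Algebra.TensorProduct.tmul_mul_tmul, one_mul, mul_one]
  rw [uy_nuz F hchar]
  simp only [TensorProduct.tmul_add, TensorProduct.add_tmul]
  abel

lemma G_nux (hchar : (2 : F) ≠ 0) (r : P F) :
    G F r * ((1 : P F) ⊗ₜ[F] nux F) = ((1 : P F) ⊗ₜ[F] nux F) * G F (r - 2) := by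
  unfold G
  simp only [add_mul, mul_add, Algebra.TensorProduct.tmul_mul_tmul, one_mul, mul_one]
  rw [uy_nux F hchar]
  simp only [TensorProduct.tmul_sub, TensorProduct.sub_tmul]
  abel

lemma nn_xz (hchar : (2 : F) ≠ 0) :
    ((1 : P F) ⊗ₜ[F] nux F) * ((1 : P F) ⊗ₜ[F] nuz F)
      = (4 : F)⁻¹ • (ttL F - tty F ^ 2 - tty F) := by
  unfold ttL tty
  simp only [Algebra.TensorProduct.tmul_mul_tmul, one_mul, nux_nuz F hchar,
    Algebra.TensorProduct.tmul_pow, one_pow, TensorProduct.tmul_smul, TensorProduct.tmul_sub]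

lemma nn_zx (hchar : (2 : F) ≠ 0) :
    ((1 : P F) ⊗ₜ[F] nuz F) * ((1 : P F) ⊗ₜ[F] nux F)
      = (4 : F)⁻¹ • (ttL F - tty F ^ 2 + tty F) := by
  unfold ttL tty
  simp only [Algebra.TensorProduct.tmul_mul_tmul, one_mul, nuz_nux F hchar,
    Algebra.TensorProduct.tmul_pow, one_pow, TensorProduct.tmul_smul, TensorProduct.tmul_sub,
    TensorProduct.tmul_add]

lemma RL_eq (hchar : (2 : F) ≠ 0) :
    Rel F * Lel F = -(((4 : F)⁻¹ • (ttL F - tty F ^ 2 - tty F))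
      * G F (2 * (pc F + pa F - pb F + 1)) * G F (2 * (pa F - pb F - pc F - 1) + 2)) := by
  rw [Rel_eq F hchar, Lel_eq F hchar, Tmul_neg]
  congr 1
  rw [← Tmul_assoc, Tmul_assoc F ((1 : P F) ⊗ₜ[F] nux F), G_nuz F hchar,
    show 2 * (pc F + pa F - pb F + 1) - 2 + 2 = 2 * (pc F + pa F - pb F + 1) by ring,
    ← Tmul_assoc F ((1 : P F) ⊗ₜ[F] nux F), nn_xz F hchar]

lemma LR_eq (hchar : (2 : F) ≠ 0) :
    Lel F * Rel F = -(((4 : F)⁻¹ • (ttL F - tty F ^ 2 + tty F))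
      * G F (2 * (pa F - pb F - pc F - 1)) * G F (2 * (pc F + pa F - pb F + 1) - 2)) := by
  rw [Rel_eq F hchar, Lel_eq F hchar, Tneg_mul]
  congr 1
  rw [← Tmul_assoc, Tmul_assoc F ((1 : P F) ⊗ₜ[F] nuz F), G_nux F hchar,
    show 2 * (pa F - pb F - pc F - 1) + 2 - 2 = 2 * (pa F - pb F - pc F - 1) by ring,
    ← Tmul_assoc F ((1 : P F) ⊗ₜ[F] nuz F), nn_zx F hchar]

/-- The commuting generating set. -/
def gens : Set (T F) := {tty F, ttL F} ∪ Set.range (cp F)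

lemma gens_comm : ∀ x ∈ gens F, ∀ y ∈ gens F, x * y = y * x := by
  intro x hx y hy
  simp only [gens, Set.mem_union, Set.mem_insert_iff, Set.mem_singleton_iff,
    Set.mem_range] at hx hy
  rcases hx with (rfl | rfl) | ⟨p, rfl⟩
  · rcases hy with (rfl | rfl) | ⟨q, rfl⟩
    · rfl
    · exact (tty_ttL F).eq
    · exact ((cp_comm F q _).symm).eq
  · rcases hy with (rfl | rfl) | ⟨q, rfl⟩
    · exact ((tty_ttL F).symm).eq
    · rfl
    · exact ((cp_comm F q _).symm).eq
  · exact (cp_comm F p y).eq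

lemma comm_with_adjoin {g : T F} (hg : g ∈ gens F) {x : T F}
    (hx : x ∈ Algebra.adjoin F (gens F)) : Commute g x := by
  induction hx using Algebra.adjoin_induction with
  | mem y hy => exact gens_comm F g hg y hy
  | algebraMap r => exact (Algebra.commutes r g).symm
  | add x y hx hy ihx ihy => exact ihx.add_right ihy
  | mul x y hx hy ihx ihy => exact ihx.mul_right ihy

lemma commute_of_adjoin {u v : T F} (hu : u ∈ Algebra.adjoin F (gens F))
    (hv : v ∈ Algebra.adjoin F (gens F)) : Commute u v := by
  induction hu using Algebra.adjoin_induction with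
  | mem y hy => exact comm_with_adjoin F hy hv
  | algebraMap r => exact Algebra.commutes r v
  | add x y hx hy ihx ihy => exact ihx.add_left ihy
  | mul x y hx hy ihx ihy => exact ihx.mul_left ihy

lemma Tsmul_mem (S : Subalgebra F (T F)) {x} (hx : x ∈ S) (r : F) : r • x ∈ S := S.smul_mem hx r
lemma Tpow_mem (S : Subalgebra F (T F)) {x} (hx : x ∈ S) (n : ℕ) : x ^ n ∈ S := pow_mem hx n
lemma Tsub_mem (S : Subalgebra F (T F)) {x y} (hx : x ∈ S) (hy : y ∈ S) : x - y ∈ S := by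
  rw [sub_eq_add_neg, ← neg_one_smul F y]
  exact add_mem hx (S.smul_mem hy _)
lemma Tneg_mem (S : Subalgebra F (T F)) {x} (hx : x ∈ S) : -x ∈ S := by
  rw [← neg_one_smul F x]
  exact S.smul_mem hx _

lemma tty_mem : tty F ∈ Algebra.adjoin F (gens F) :=
  Algebra.subset_adjoin (Or.inl (Or.inl rfl))

lemma ttL_mem : ttL F ∈ Algebra.adjoin F (gens F) :=
  Algebra.subset_adjoin (Or.inl (Or.inr rfl))

lemma cp_mem (p : P F) : cp F p ∈ Algebra.adjoin F (gens F) :=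
  Algebra.subset_adjoin (Or.inr ⟨p, rfl⟩)

lemma G_mem (r : P F) : G F r ∈ Algebra.adjoin F (gens F) := by
  rw [G_eq]
  exact add_mem (mul_mem (cp_mem F 2) (tty_mem F)) (cp_mem F r)

lemma theta_mem : theta F ∈ Algebra.adjoin F (gens F) :=
  Tsub_mem F _ (tty_mem F) (cp_mem F (pb F))

lemma vartheta_mem : vartheta F ∈ Algebra.adjoin F (gens F) :=
  add_mem (tty_mem F) (cp_mem F (pa F))

lemma K_mem (r : F) : (r • (ttL F - tty F ^ 2 - tty F)) ∈ Algebra.adjoin F (gens F) :=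
  Tsmul_mem F _ (Tsub_mem F _ (Tsub_mem F _ (ttL_mem F) (Tpow_mem F _ (tty_mem F) 2)) (tty_mem F)) _

lemma K'_mem (r : F) : (r • (ttL F - tty F ^ 2 + tty F)) ∈ Algebra.adjoin F (gens F) :=
  Tsmul_mem F _ (add_mem (Tsub_mem F _ (ttL_mem F) (Tpow_mem F _ (tty_mem F) 2)) (tty_mem F)) _

lemma RL_mem (hchar : (2 : F) ≠ 0) : Rel F * Lel F ∈ Algebra.adjoin F (gens F) := by
  rw [RL_eq F hchar]
  exact Tneg_mem F _ (mul_mem (mul_mem (K_mem F _) (G_mem F _)) (G_mem F _))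

lemma LR_mem (hchar : (2 : F) ≠ 0) : Lel F * Rel F ∈ Algebra.adjoin F (gens F) := by
  rw [LR_eq F hchar]
  exact Tneg_mem F _ (mul_mem (mul_mem (K'_mem F _) (G_mem F _)) (G_mem F _))

theorem statement17 (hchar : (2 : F) ≠ 0) :
    ∀ u ∈ ([theta F, vartheta F, Rel F * Lel F, Lel F * Rel F,
        Rel F * Lel F - Lel F * Rel F] : List (T F)),
      ∀ v ∈ ([theta F, vartheta F, Rel F * Lel F, Lel F * Rel F,
        Rel F * Lel F - Lel F * Rel F] : List (T F)),
        Commute u v := by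
  have hmem : ∀ w ∈ ([theta F, vartheta F, Rel F * Lel F, Lel F * Rel F,
      Rel F * Lel F - Lel F * Rel F] : List (T F)), w ∈ Algebra.adjoin F (gens F) := by
    intro w hw
    simp only [List.mem_cons, List.not_mem_nil, or_false] at hw
    rcases hw with rfl | rfl | rfl | rfl | rfl
    · exact theta_mem F
    · exact vartheta_mem F
    · exact RL_mem F hchar
    · exact LR_mem F hchar
    · exact Tsub_mem F _ (RL_mem F hchar) (LR_mem F hchar)
  intro u hu v hv
  exact commute_of_adjoin F (hmem u hu) (hmem v hv)

end RacahPaper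
end
end
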